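/- The operator C(Id + D^{−1}C), where D := (η/τ + α)·Id + C, is a bounded self-adjoint operator on Ψ satisfying the coercivity estimate ⟪C(Id + D^{−1}C)ψ, ψ⟫_Ψ ≥ ⟪Cψ, ψ⟫_Ψ ≥ c_*‖ψ‖_Ψ² for all ψ ∈ Ψ; consequently the substituted elliptic problem ⟪C(Id + D^{−1}C)(e u), e v⟫_Ψ = ⟪(η/τ) C D^{−1} φ^{k−1}, e v⟫_Ψ + ℓ^k(v) for all v ∈ V has a unique solution u ∈ g^k + V. -/
import Mathlib


open scoped RealInnerProductSpace

/-- The operator `C(Id + D⁻¹C)`, with `D := (η/τ + α)·Id + C`, is bounded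
self-adjoint and coercive: `⟪C(Id + D⁻¹C)ψ, ψ⟫ ≥ ⟪Cψ, ψ⟫ ≥ c_*‖ψ‖²`; consequently
the substituted elliptic problem has a unique solution `u ∈ gᵏ + V`. -/
theorem stmt_8
    {X Ψ : Type*}
    [NormedAddCommGroup X] [InnerProductSpace ℝ X] [CompleteSpace X]
    [NormedAddCommGroup Ψ] [InnerProductSpace ℝ Ψ] [CompleteSpace Ψ]
    (V : Submodule ℝ X) (hV : IsClosed (V : Set X))
    (e : X →L[ℝ] Ψ) (C : Ψ →L[ℝ] Ψ)
    (hCsym : ∀ φ ψ : Ψ, ⟪C φ, ψ⟫ = ⟪φ, C ψ⟫)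
    (cstar : ℝ) (hcstar : 0 < cstar)
    (hCcoer : ∀ ψ : Ψ, cstar * ‖ψ‖ ^ 2 ≤ ⟪C ψ, ψ⟫)
    (c₀ : ℝ) (hc₀ : 0 < c₀)
    (hacoer : ∀ v ∈ V, c₀ * ‖v‖ ^ 2 ≤ ⟪C (e v), e v⟫)
    (η τ α : ℝ) (hη : 0 < η) (hτ : 0 < τ) (hα : 0 ≤ α)
    (φprev : Ψ) (ℓk : X →L[ℝ] ℝ) (gk : X)
    (D : Ψ →L[ℝ] Ψ)
    (hD : D = (η / τ + α) • ContinuousLinearMap.id ℝ Ψ + C)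
    (Dinv : Ψ →L[ℝ] Ψ)
    (hDinv₁ : D.comp Dinv = ContinuousLinearMap.id ℝ Ψ)
    (hDinv₂ : Dinv.comp D = ContinuousLinearMap.id ℝ Ψ)
    (M : Ψ →L[ℝ] Ψ)
    (hM : M = C.comp (ContinuousLinearMap.id ℝ Ψ + Dinv.comp C)) :
    (∀ ψ χ : Ψ, ⟪M ψ, χ⟫ = ⟪ψ, M χ⟫) ∧
    (∀ ψ : Ψ, ⟪C ψ, ψ⟫ ≤ ⟪M ψ, ψ⟫ ∧ cstar * ‖ψ‖ ^ 2 ≤ ⟪C ψ, ψ⟫) ∧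
    (∃! u : X, u - gk ∈ V ∧
      ∀ v ∈ V, ⟪M (e u), e v⟫ = ⟪(η / τ) • C (Dinv φprev), e v⟫ + ℓk v) := by
  -- D is self-adjoint
  have hDsym : ∀ φ ψ : Ψ, ⟪D φ, ψ⟫ = ⟪φ, D ψ⟫ := by
    intro φ ψ
    simp only [hD, ContinuousLinearMap.add_apply, ContinuousLinearMap.coe_smul',
      Pi.smul_apply, ContinuousLinearMap.id_apply, inner_add_left, inner_add_right,
      real_inner_smul_left, real_inner_smul_right, hCsym φ ψ]
  have hDD : ∀ ψ, D (Dinv ψ) = ψ := fun ψ =>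
    congrFun (congrArg DFunLike.coe hDinv₁) ψ
  -- Dinv is self-adjoint
  have hDinvsym : ∀ φ ψ : Ψ, ⟪Dinv φ, ψ⟫ = ⟪φ, Dinv ψ⟫ := by
    intro φ ψ
    calc ⟪Dinv φ, ψ⟫ = ⟪Dinv φ, D (Dinv ψ)⟫ := by rw [hDD]
      _ = ⟪D (Dinv φ), Dinv ψ⟫ := (hDsym _ _).symm
      _ = ⟪φ, Dinv ψ⟫ := by rw [hDD]
  have hMapp : ∀ ψ, M ψ = C ψ + C (Dinv (C ψ)) := by
    intro ψ; simp [hM]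
  -- positivity of Dinv
  have hDinvpos : ∀ ψ : Ψ, 0 ≤ ⟪Dinv ψ, ψ⟫ := by
    intro ψ
    have h1 : ⟪Dinv ψ, ψ⟫ = ⟪Dinv ψ, D (Dinv ψ)⟫ := by rw [hDD]
    rw [h1, hD]
    simp only [ContinuousLinearMap.add_apply, ContinuousLinearMap.coe_smul',
      Pi.smul_apply, ContinuousLinearMap.id_apply, inner_add_right, real_inner_smul_right]
    have h2 : 0 ≤ ⟪Dinv ψ, C (Dinv ψ)⟫ := by
      rw [← hCsym]
      exact le_trans (by positivity) (hCcoer (Dinv ψ))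
    have h3 : 0 ≤ (η / τ + α) * ⟪Dinv ψ, Dinv ψ⟫ := by
      apply mul_nonneg
      · positivity
      · exact real_inner_self_nonneg
    linarith
  -- symmetry of M
  have hMsym : ∀ ψ χ : Ψ, ⟪M ψ, χ⟫ = ⟪ψ, M χ⟫ := by
    intro ψ χ
    rw [hMapp, hMapp, inner_add_left, inner_add_right, hCsym ψ χ]
    congr 1
    calc ⟪C (Dinv (C ψ)), χ⟫ = ⟪Dinv (C ψ), C χ⟫ := hCsym _ _
      _ = ⟪C ψ, Dinv (C χ)⟫ := hDinvsym _ _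
      _ = ⟪ψ, C (Dinv (C χ))⟫ := hCsym _ _
  have hMge : ∀ ψ : Ψ, ⟪C ψ, ψ⟫ ≤ ⟪M ψ, ψ⟫ := by
    intro ψ
    rw [hMapp, inner_add_left]
    have : 0 ≤ ⟪C (Dinv (C ψ)), ψ⟫ := by
      rw [hCsym]
      exact hDinvpos (C ψ)
    linarith
  refine ⟨hMsym, fun ψ => ⟨hMge ψ, hCcoer ψ⟩, ?_⟩
  -- Lax-Milgram on V
  haveI : CompleteSpace V := hV.completeSpace_coe
  set E : V →L[ℝ] Ψ := e.comp V.subtypeL with hE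
  set B : V →L[ℝ] V →L[ℝ] ℝ :=
    (innerSL ℝ (E := Ψ)).bilinearComp (M.comp E) E with hB
  have hBapp : ∀ w v : V, B w v = ⟪M (e w), e v⟫ := fun w v => rfl
  have hcoer : IsCoercive B := by
    refine ⟨c₀, hc₀, fun v => ?_⟩
    rw [hBapp]
    calc c₀ * ‖v‖ * ‖v‖ = c₀ * ‖(v : X)‖ ^ 2 := by
          rw [Submodule.norm_coe]; ring
      _ ≤ ⟪C (e v), e v⟫ := hacoer v v.2
      _ ≤ ⟪M (e v), e v⟫ := hMge _
  -- the right-hand side functional on V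
  set F : V →L[ℝ] ℝ :=
    ((innerSL ℝ ((η / τ) • C (Dinv φprev))).comp E) + ℓk.comp V.subtypeL
      - (innerSL ℝ (M (e gk))).comp E with hF
  have hFapp : ∀ v : V, F v = ⟪(η / τ) • C (Dinv φprev), e v⟫ + ℓk v - ⟪M (e gk), e v⟫ :=
    fun v => rfl
  set f : V := (InnerProductSpace.toDual ℝ V).symm F with hf
  have hfapp : ∀ v : V, ⟪f, v⟫ = F v := fun v =>
    InnerProductSpace.toDual_symm_apply
  set w : V := hcoer.continuousLinearEquivOfBilin.symm f with hw
  have hBw : ∀ v : V, B w v = F v := by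
    intro v
    rw [← hfapp v, ← hcoer.continuousLinearEquivOfBilin_apply w v, hw,
      ContinuousLinearEquiv.apply_symm_apply]
  refine ⟨gk + (w : X), ⟨by simp, ?_⟩, ?_⟩
  · intro v hv
    have h := hBw ⟨v, hv⟩
    rw [hBapp, hFapp] at h
    rw [map_add, map_add, inner_add_left]
    linarith [h]
  · rintro u' ⟨hu'V, hu'⟩
    set w' : V := ⟨u' - gk, hu'V⟩ with hw'
    have hBw' : ∀ v : V, ⟪f, v⟫ = B w' v := by
      intro v
      rw [hfapp, hBapp, hFapp]
      have h1 : e (w' : X) = e u' - e gk := by rw [hw']; simp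
      rw [h1, map_sub, inner_sub_left, hu' v v.2]
    have : w' = w := by
      rw [hw, hcoer.unique_continuousLinearEquivOfBilin hBw',
        ContinuousLinearEquiv.symm_apply_apply]
    have h3 : (w' : X) = (w : X) := congrArg _ this
    rw [hw'] at h3
    simp only [Submodule.coe_mk] at h3
    rw [← h3]; abel
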